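/- Let A be a trace-class-valued random variable such that A(ω) ≥ 0 and √A(ω) is trace class for all ω, and such that the Bochner integrals exist. Then E[√A] ≤ √(E[A]) in the Loewner order. -/

import Mathlib

open scoped InnerProductSpace Topology
open MeasureTheory Filter ContinuousLinearMap

noncomputable section

variable {H : Type*} [NormedAddCommGroup H] [InnerProductSpace ℂ H] [CompleteSpace H]

/-- The absolute value `|A| = sqrt (A† A)` of a bounded operator. -/
noncomputable def absOp (A : H →L[ℂ] H) : H →L[ℂ] H :=
  CFC.sqrt (ContinuousLinearMap.adjoint A * A)

/-- A fixed Hilbert basis of `H`. -/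
noncomputable def hb (H : Type*) [NormedAddCommGroup H] [InnerProductSpace ℂ H]
    [CompleteSpace H] : HilbertBasis (exists_hilbertBasis ℂ H).choose ℂ H :=
  (exists_hilbertBasis ℂ H).choose_spec.choose

/-- The trace of an operator, computed along the fixed Hilbert basis. -/
noncomputable def traceCLM (A : H →L[ℂ] H) : ℂ :=
  ∑' i, ⟪(hb H) i, A ((hb H) i)⟫_ℂ

/-- `A` is trace class iff the diagonal of `|A|` is summable. -/
def IsTraceClass (A : H →L[ℂ] H) : Prop :=
  Summable fun i => (⟪(hb H) i, absOp A ((hb H) i)⟫_ℂ).re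

/-- The trace norm `‖A‖₁ = Tr |A|`. -/
noncomputable def traceNorm (A : H →L[ℂ] H) : ℝ :=
  ∑' i, (⟪(hb H) i, absOp A ((hb H) i)⟫_ℂ).re

/-- Operator monotonicity of the square root (invertible case), phrased as:
if `0 ≤ a`, `0 ≤ b`, `b` invertible, and `a * a ≤ b * b`, then `a ≤ b`. -/
lemma le_of_sq_le_sq_unit {A : Type*} [CStarAlgebra A] [PartialOrder A] [StarOrderedRing A]
    {a : A} {b : Aˣ} (ha : 0 ≤ a) (hb : 0 ≤ (b : A)) (h : a * a ≤ (b : A) * b) :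
    a ≤ (b : A) := by
  obtain hA | hA := subsingleton_or_nontrivial A
  · exact le_of_eq (Subsingleton.elim _ _)
  have hb_inv : (0 : A) ≤ ↑b⁻¹ := CFC.inv_nonneg_of_nonneg b hb
  have hsa : IsSelfAdjoint a := .of_nonneg ha
  have hsbi : IsSelfAdjoint (↑b⁻¹ : A) := .of_nonneg hb_inv
  -- step 1 : `‖a * b⁻¹‖ ≤ 1`
  have hconj : (↑b⁻¹ : A) * (a * a) * ↑b⁻¹ ≤ 1 := by
    have := star_left_conjugate_le_conjugate h (↑b⁻¹ : A)
    rw [hsbi.star_eq] at this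
    refine this.trans_eq ?_
    calc (↑b⁻¹ : A) * ((b : A) * b) * ↑b⁻¹
        = ((↑b⁻¹ : A) * b) * ((b : A) * ↑b⁻¹) := by
          simp only [mul_assoc]
      _ = 1 := by rw [Units.inv_mul, Units.mul_inv, one_mul]
  have hconj0 : (0 : A) ≤ (↑b⁻¹ : A) * (a * a) * ↑b⁻¹ := by
    have : (0 : A) ≤ a * a := by simpa [hsa.star_eq] using star_mul_self_nonneg a
    exact conjugate_nonneg_of_nonneg this hb_inv
  have hnorm1 : ‖a * (↑b⁻¹ : A)‖ ≤ 1 := by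
    rw [← sq_le_one_iff₀ (norm_nonneg _), sq, ← CStarRing.norm_star_mul_self, star_mul,
      hsa.star_eq, hsbi.star_eq]
    calc ‖(↑b⁻¹ : A) * a * (a * ↑b⁻¹)‖ = ‖(↑b⁻¹ : A) * (a * a) * ↑b⁻¹‖ := by
          simp only [mul_assoc]
      _ ≤ 1 := (CStarAlgebra.norm_le_one_iff_of_nonneg _ hconj0).mpr hconj
  -- step 2 : conclude via `le_iff_norm_sqrt_mul_sqrt_inv`
  rw [le_iff_norm_sqrt_mul_sqrt_inv ha hb]
  have hq0 : (0 : A) ≤ CFC.sqrt (↑b⁻¹ : A) := CFC.sqrt_nonneg _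
  have hp0 : (0 : A) ≤ CFC.sqrt (↑b⁻¹ : A) * a * CFC.sqrt (↑b⁻¹ : A) :=
    conjugate_nonneg_of_nonneg ha hq0
  rw [← sq_le_one_iff₀ (norm_nonneg _), sq, ← CStarRing.norm_star_mul_self, star_mul,
    (IsSelfAdjoint.of_nonneg (CFC.sqrt_nonneg _)).star_eq,
    (IsSelfAdjoint.of_nonneg (CFC.sqrt_nonneg _)).star_eq]
  have hrw : CFC.sqrt (↑b⁻¹ : A) * CFC.sqrt a * (CFC.sqrt a * CFC.sqrt (↑b⁻¹ : A))
      = CFC.sqrt (↑b⁻¹ : A) * a * CFC.sqrt (↑b⁻¹ : A) := by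
    rw [mul_assoc, ← mul_assoc (CFC.sqrt a), CFC.sqrt_mul_sqrt_self a ha, ← mul_assoc]
  rw [hrw]
  set p := CFC.sqrt (↑b⁻¹ : A) * a * CFC.sqrt (↑b⁻¹ : A) with hp
  rcases eq_or_ne ‖p‖ 0 with h0 | h0
  · simpa [h0] using zero_le_one
  have hmem : ‖p‖ ∈ spectrum ℝ p := CStarAlgebra.norm_mem_spectrum_of_nonneg hp0
  have hswap : ‖p‖ ∈ spectrum ℝ (a * (↑b⁻¹ : A)) := by
    have h1 : ‖p‖ ∈ spectrum ℝ (CFC.sqrt (↑b⁻¹ : A) * (a * CFC.sqrt (↑b⁻¹ : A))) \ {0} := by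
      constructor
      · rwa [← mul_assoc]
      · simpa using h0
    rw [spectrum.nonzero_mul_comm] at h1
    have h2 : a * CFC.sqrt (↑b⁻¹ : A) * CFC.sqrt (↑b⁻¹ : A) = a * ↑b⁻¹ := by
      rw [mul_assoc, CFC.sqrt_mul_sqrt_self _ hb_inv]
    rw [h2] at h1
    exact h1.1
  have := spectrum.norm_le_norm_of_mem hswap
  rw [Real.norm_of_nonneg (norm_nonneg p)] at this
  exact this.trans hnorm1


lemma smul_pos_isPos {ε : ℝ} (hε : 0 ≤ ε) {b : H →L[ℂ] H} (hb : 0 ≤ b) :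
    (0 : H →L[ℂ] H) ≤ (ε : ℂ) • b := by
  rw [ContinuousLinearMap.nonneg_iff_isPositive] at hb ⊢
  constructor
  · rw [← ContinuousLinearMap.isSelfAdjoint_iff_isSymmetric, IsSelfAdjoint, star_smul,
      (ContinuousLinearMap.isSelfAdjoint_iff_isSymmetric.2 hb.1).star_eq]
    norm_num
  · intro x
    have := hb.2 x
    simp only [ContinuousLinearMap.reApplyInnerSelf, ContinuousLinearMap.smul_apply,
      inner_smul_left, Complex.conj_ofReal, RCLike.re_to_complex, Complex.re_ofReal_mul] at *
    exact mul_nonneg hε this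

lemma smul_one_isPos {ε : ℝ} (hε : 0 ≤ ε) : (0 : H →L[ℂ] H) ≤ (ε : ℂ) • 1 :=
  smul_pos_isPos hε (by rw [ContinuousLinearMap.nonneg_iff_isPositive]; exact ContinuousLinearMap.isPositive_one)

lemma clm_le_of_sq_le_sq_unit {a : H →L[ℂ] H} {b : (H →L[ℂ] H)ˣ} (ha : 0 ≤ a)
    (hb : 0 ≤ (b : H →L[ℂ] H)) (h : a * a ≤ (b : H →L[ℂ] H) * b) : a ≤ (b : H →L[ℂ] H) :=
  le_of_sq_le_sq_unit ha hb h

lemma clm_le_of_sq_le_sq {a b : H →L[ℂ] H} (ha : 0 ≤ a) (hb : 0 ≤ b) (h : a * a ≤ b * b) :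
    a ≤ b := by
  have key : ∀ ε : ℝ, 0 < ε → a ≤ b + (ε : ℂ) • 1 := by
    intro ε hε
    have h1 : ((ε : ℂ) • 1 : H →L[ℂ] H) ≤ b + (ε : ℂ) • 1 := le_add_of_nonneg_left hb
    have hu : IsUnit (b + (ε : ℂ) • 1) := by
      refine CStarAlgebra.isUnit_of_le _ h1 ⟨smul_one_isPos hε.le, ?_⟩
      have : ((ε : ℂ) • 1 : H →L[ℂ] H) = algebraMap ℂ (H →L[ℂ] H) (ε : ℂ) := by
        rw [Algebra.algebraMap_eq_smul_one]
      rw [this]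
      exact (isUnit_iff_ne_zero.2 (by exact_mod_cast hε.ne')).map (algebraMap ℂ (H →L[ℂ] H))
    have hsq : a * a ≤ (b + (ε : ℂ) • 1) * (b + (ε : ℂ) • 1) := by
      refine h.trans ?_
      have e : (b + (ε : ℂ) • 1) * (b + (ε : ℂ) • 1)
          = b * b + ((ε : ℂ) • b + ((ε : ℂ) • b + ((ε : ℂ) * (ε : ℂ)) • 1)) := by
        simp only [mul_add, add_mul, mul_smul_comm, smul_mul_assoc, mul_one, one_mul,
          smul_smul, smul_add, add_assoc]
      rw [e]
      have h2 := smul_pos_isPos hε.le hb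
      have h3 : (0 : H →L[ℂ] H) ≤ ((ε : ℂ) * (ε : ℂ)) • 1 := by
        have := smul_one_isPos (mul_nonneg hε.le hε.le) (H := H)
        rw [Complex.ofReal_mul] at this
        exact this
      exact le_add_of_nonneg_right (add_nonneg h2 (add_nonneg h2 h3))
    have := clm_le_of_sq_le_sq_unit (b := hu.unit) ha
      (by rw [hu.unit_spec]; exact add_nonneg hb (smul_one_isPos hε.le))
      (by rwa [hu.unit_spec])
    rwa [hu.unit_spec] at this
  rw [ContinuousLinearMap.le_def]
  have hasa : IsSelfAdjoint a := ((ContinuousLinearMap.nonneg_iff_isPositive a).1 ha).isSelfAdjoint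
  have hbsa : IsSelfAdjoint b := ((ContinuousLinearMap.nonneg_iff_isPositive b).1 hb).isSelfAdjoint
  refine ⟨ContinuousLinearMap.isSelfAdjoint_iff_isSymmetric.1 (hbsa.sub hasa), fun x => ?_⟩
  rcases eq_or_ne x 0 with rfl | hx
  · simp [ContinuousLinearMap.reApplyInnerSelf]
  have hx2 : 0 < ‖x‖ ^ 2 := pow_pos (norm_pos_iff.2 hx) 2
  have hv : ∀ ε : ℝ, 0 < ε →
      0 ≤ (b - a).reApplyInnerSelf x + ε := by
    intro ε hε
    have hε' : 0 < ε / ‖x‖ ^ 2 := by positivity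
    have hk := ((ContinuousLinearMap.le_def _ _).1 (key _ hε')).2 x
    simp only [ContinuousLinearMap.reApplyInnerSelf, ContinuousLinearMap.sub_apply,
      ContinuousLinearMap.add_apply, ContinuousLinearMap.smul_apply,
      ContinuousLinearMap.one_apply, inner_sub_left, inner_add_left, inner_smul_left,
      Complex.conj_ofReal, map_sub, map_add, Complex.re_ofReal_mul, RCLike.re_to_complex] at hk ⊢
    have hxx : (⟪x, x⟫_ℂ).re = ‖x‖ ^ 2 := by
      rw [← RCLike.re_to_complex, inner_self_eq_norm_sq (𝕜 := ℂ)]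
    rw [hxx] at hk
    have : ε / ‖x‖ ^ 2 * ‖x‖ ^ 2 = ε := div_mul_cancel₀ ε hx2.ne'
    linarith
  by_contra hneg
  push_neg at hneg
  have := hv (-(b - a).reApplyInnerSelf x / 2) (by linarith)
  linarith


lemma inner_integral_left {f : Ω → H} (hf : Integrable f μ) (y : H) :
    ⟪∫ ω, f ω ∂μ, y⟫_ℂ = ∫ ω, ⟪f ω, y⟫_ℂ ∂μ := by
  calc ⟪∫ ω, f ω ∂μ, y⟫_ℂ = starRingEnd ℂ ⟪y, ∫ ω, f ω ∂μ⟫_ℂ := (inner_conj_symm _ _).symm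
    _ = starRingEnd ℂ (∫ ω, ⟪y, f ω⟫_ℂ ∂μ) := by rw [integral_inner hf]
    _ = ∫ ω, starRingEnd ℂ ⟪y, f ω⟫_ℂ ∂μ := (integral_conj).symm
    _ = ∫ ω, ⟪f ω, y⟫_ℂ ∂μ := by simp only [inner_conj_symm]

lemma integral_isPositive {B : Ω → H →L[ℂ] H} (hB : Integrable B μ)
    (h : ∀ ω, (B ω).IsPositive) : (∫ ω, B ω ∂μ).IsPositive := by
  constructor
  · rw [← ContinuousLinearMap.isSelfAdjoint_iff_isSymmetric, ContinuousLinearMap.isSelfAdjoint_iff_isSymmetric]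
    intro x y
    simp only [ContinuousLinearMap.coe_coe]
    rw [ContinuousLinearMap.integral_apply hB, ContinuousLinearMap.integral_apply hB,
      inner_integral_left (hB.apply_continuousLinearMap x) y,
      ← integral_inner (hB.apply_continuousLinearMap y) x]
    refine integral_congr_ae (Eventually.of_forall fun ω => ?_)
    simpa using ContinuousLinearMap.isSelfAdjoint_iff_isSymmetric.1 (h ω).isSelfAdjoint x y
  · intro x
    have h1 : ⟪(∫ ω, B ω ∂μ) x, x⟫_ℂ = ∫ ω, ⟪B ω x, x⟫_ℂ ∂μ := by
      rw [ContinuousLinearMap.integral_apply hB,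
        inner_integral_left (hB.apply_continuousLinearMap x) x]
    have hInt : Integrable (fun ω => ⟪B ω x, x⟫_ℂ) μ :=
      (hB.apply_continuousLinearMap x).inner_const x
    rw [ContinuousLinearMap.reApplyInnerSelf, h1, ← integral_re hInt]
    exact integral_nonneg fun ω => (RCLike.nonneg_iff.mp ((h ω).inner_nonneg_left x)).1

/-- operator Jensen inequality for the square root:
`E[√A] ≤ √(E[A])` in the Loewner order. -/
theorem sqrt_expectation_jensen [TopologicalSpace.SeparableSpace H]
    {Ω : Type*} [MeasurableSpace Ω] (μ : Measure Ω) [IsProbabilityMeasure μ]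
    (A : Ω → (H →L[ℂ] H))
    (hpos : ∀ ω, (A ω).IsPositive)
    (htc : ∀ ω, IsTraceClass (A ω))
    (hsqrt_tc : ∀ ω, IsTraceClass (CFC.sqrt (A ω)))
    (hint : Integrable A μ)
    (hint_sqrt : Integrable (fun ω => CFC.sqrt (A ω)) μ) :
    (CFC.sqrt (∫ ω, A ω ∂μ) - ∫ ω, CFC.sqrt (A ω) ∂μ).IsPositive := by
  classical
  set T := ∫ ω, A ω ∂μ with hTdef
  set S := ∫ ω, CFC.sqrt (A ω) ∂μ with hSdef
  have hA0 : ∀ ω, (0 : H →L[ℂ] H) ≤ A ω := fun ω =>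
    (ContinuousLinearMap.nonneg_iff_isPositive _).2 (hpos ω)
  have hsA0 : ∀ ω, (0 : H →L[ℂ] H) ≤ CFC.sqrt (A ω) := fun _ => CFC.sqrt_nonneg _
  have hsApos : ∀ ω, (CFC.sqrt (A ω)).IsPositive := fun ω =>
    (ContinuousLinearMap.nonneg_iff_isPositive _).1 (hsA0 ω)
  have hT0 : (0 : H →L[ℂ] H) ≤ T :=
    (ContinuousLinearMap.nonneg_iff_isPositive _).2 (integral_isPositive hint hpos)
  have hS0 : (0 : H →L[ℂ] H) ≤ S :=
    (ContinuousLinearMap.nonneg_iff_isPositive _).2 (integral_isPositive hint_sqrt hsApos)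
  have hSsa : IsSelfAdjoint S :=
    ((ContinuousLinearMap.nonneg_iff_isPositive _).1 hS0).isSelfAdjoint
  have hSsym := ContinuousLinearMap.isSelfAdjoint_iff_isSymmetric.1 hSsa
  -- step 1 : `S * S ≤ T`
  have hsq : S * S ≤ T := by
    rw [ContinuousLinearMap.le_def]
    have hSS : IsSelfAdjoint (S * S) := by
      rw [IsSelfAdjoint, star_mul, hSsa.star_eq]
    refine ⟨ContinuousLinearMap.isSelfAdjoint_iff_isSymmetric.1 ((((ContinuousLinearMap.nonneg_iff_isPositive _).1 hT0).isSelfAdjoint).sub hSS),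
      fun x => ?_⟩
    set g : Ω → ℝ := fun ω => ‖CFC.sqrt (A ω) x‖ with hgdef
    -- pointwise identity : `re ⟪A ω x, x⟫ = g ω ^ 2`
    have hpt : ∀ ω, RCLike.re ⟪A ω x, x⟫_ℂ = g ω ^ 2 := by
      intro ω
      have h1 : A ω x = CFC.sqrt (A ω) (CFC.sqrt (A ω) x) := by
        conv_lhs => rw [← CFC.sqrt_mul_sqrt_self (A ω) (hA0 ω)]
        rfl
      have hsym := ContinuousLinearMap.isSelfAdjoint_iff_isSymmetric.1
        (hsApos ω).isSelfAdjoint (CFC.sqrt (A ω) x) x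
      simp only [ContinuousLinearMap.coe_coe] at hsym
      rw [h1, hsym, ← inner_self_eq_norm_sq (𝕜 := ℂ)]
    -- re ⟪T x, x⟫ = ∫ g ^ 2
    have hInt1 : Integrable (fun ω => ⟪A ω x, x⟫_ℂ) μ :=
      (hint.apply_continuousLinearMap x).inner_const x
    have hTx : RCLike.re ⟪T x, x⟫_ℂ = ∫ ω, g ω ^ 2 ∂μ := by
      rw [hTdef, ContinuousLinearMap.integral_apply hint,
        inner_integral_left (hint.apply_continuousLinearMap x) x, ← integral_re hInt1]
      exact integral_congr_ae (Eventually.of_forall hpt)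
    -- re ⟪(S * S) x, x⟫ = ‖S x‖ ^ 2
    have hSx : RCLike.re ⟪(S * S) x, x⟫_ℂ = ‖S x‖ ^ 2 := by
      have := hSsym (S x) x
      simp only [ContinuousLinearMap.coe_coe] at this
      rw [ContinuousLinearMap.mul_apply, this, ← inner_self_eq_norm_sq (𝕜 := ℂ)]
    -- Cauchy–Schwarz / variance step
    have hgmeas : AEStronglyMeasurable g μ :=
      (hint_sqrt.aestronglyMeasurable.apply_continuousLinearMap x).norm
    have hg2int : Integrable (fun ω => g ω ^ 2) μ := by
      refine (hInt1.re.congr (Eventually.of_forall fun ω => ?_))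
      exact hpt ω
    have hmem : MemLp g 2 μ := (memLp_two_iff_integrable_sq hgmeas).2 hg2int
    have hvar : (∫ ω, g ω ∂μ) ^ 2 ≤ ∫ ω, g ω ^ 2 ∂μ := by
      have h0 := ProbabilityTheory.variance_nonneg g μ
      rw [ProbabilityTheory.variance_eq_sub hmem] at h0
      simpa using le_of_sub_nonneg h0
    have hSnorm : ‖S x‖ ≤ ∫ ω, g ω ∂μ := by
      rw [hSdef, ContinuousLinearMap.integral_apply hint_sqrt]
      exact norm_integral_le_integral_norm _
    have hSnorm2 : ‖S x‖ ^ 2 ≤ ∫ ω, g ω ^ 2 ∂μ :=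
      (pow_le_pow_left₀ (norm_nonneg _) hSnorm 2).trans hvar
    -- conclude
    have : (T - S * S).reApplyInnerSelf x
        = RCLike.re ⟪T x, x⟫_ℂ - RCLike.re ⟪(S * S) x, x⟫_ℂ := by
      simp [ContinuousLinearMap.reApplyInnerSelf, ContinuousLinearMap.sub_apply,
        inner_sub_left]
    rw [this, hTx, hSx]
    linarith
  -- step 2 : conclude by operator monotonicity of `sqrt`
  have hbb : CFC.sqrt T * CFC.sqrt T = T := CFC.sqrt_mul_sqrt_self T hT0
  have hfin : S ≤ CFC.sqrt T :=
    clm_le_of_sq_le_sq hS0 (CFC.sqrt_nonneg _) (by rw [hbb]; exact hsq)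
  exact (ContinuousLinearMap.le_def _ _).1 hfin
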